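/- arXiv:1108.4294 — 2 statements merged into one kernel-verified Lean document; each statement's English description precedes it below -/
import Mathlib

section
/- Let A and B be unital locally convex algebras and equip the algebraic tensor product A ⊗ B with the projective tensor product topology. Then the map (χ_A, χ_B) ↦ χ_A ⊗ χ_B is a bijection from the set of pairs of continuous characters of A and B onto the set of continuous characters of A ⊗ B. -/
open TensorProduct

/-- Characters of a projective tensor product: if `A ⊗[ℂ] B` carries a topology for
which the canonical bilinear map is continuous and which has the universal property of
the projective tensor topology (a linear functional is continuous as soon as the
associated bilinear map is), then `(χ_A, χ_B) ↦ χ_A ⊗ χ_B` is a bijection from pairs of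
continuous characters of `A` and `B` onto the continuous characters of `A ⊗[ℂ] B`. -/
theorem characters_of_projective_tensor_product
    {A B : Type*} [Ring A] [Ring B] [Algebra ℂ A] [Algebra ℂ B]
    [TopologicalSpace A] [TopologicalSpace B] [TopologicalSpace (A ⊗[ℂ] B)]
    (hπ : Continuous fun p : A × B => p.1 ⊗ₜ[ℂ] p.2)
    (huniv : ∀ φ : A ⊗[ℂ] B →ₗ[ℂ] ℂ,
      Continuous (fun p : A × B => φ (p.1 ⊗ₜ[ℂ] p.2)) → Continuous φ) :
    ∃ e : {p : (A →ₐ[ℂ] ℂ) × (B →ₐ[ℂ] ℂ) // Continuous p.1 ∧ Continuous p.2} ≃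
          {χ : A ⊗[ℂ] B →ₐ[ℂ] ℂ // Continuous χ},
      ∀ (p) (a : A) (b : B), (e p : A ⊗[ℂ] B →ₐ[ℂ] ℂ) (a ⊗ₜ[ℂ] b)
        = (p : (A →ₐ[ℂ] ℂ) × (B →ₐ[ℂ] ℂ)).1 a * (p : (A →ₐ[ℂ] ℂ) × (B →ₐ[ℂ] ℂ)).2 b := by
  have hlift : ∀ p : {p : (A →ₐ[ℂ] ℂ) × (B →ₐ[ℂ] ℂ) // Continuous p.1 ∧ Continuous p.2},
      Continuous (Algebra.TensorProduct.lift p.1.1 p.1.2 (fun _ _ => Commute.all _ _)) := by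
    intro p
    refine huniv (Algebra.TensorProduct.lift p.1.1 p.1.2 (fun _ _ => Commute.all _ _)).toLinearMap
      ?_
    simp only [AlgHom.toLinearMap_apply, Algebra.TensorProduct.lift_tmul]
    exact (p.2.1.comp continuous_fst).mul (p.2.2.comp continuous_snd)
  refine ⟨⟨fun p => ⟨Algebra.TensorProduct.lift p.1.1 p.1.2 (fun _ _ => Commute.all _ _),
      hlift p⟩,
    fun χ => ⟨((χ : A ⊗[ℂ] B →ₐ[ℂ] ℂ).comp Algebra.TensorProduct.includeLeft,
        (χ : A ⊗[ℂ] B →ₐ[ℂ] ℂ).comp Algebra.TensorProduct.includeRight),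
      (χ.2.comp hπ).comp (Continuous.prodMk_left (1 : B)),
      (χ.2.comp hπ).comp (Continuous.prodMk_right (1 : A))⟩,
    ?_, ?_⟩, fun p a b => Algebra.TensorProduct.lift_tmul _ _ (fun _ _ => Commute.all _ _) a b⟩
  · rintro ⟨⟨f, g⟩, hf, hg⟩
    refine Subtype.ext (Prod.ext ?_ ?_) <;> ext x <;> simp
  · rintro ⟨χ, hχ⟩
    refine Subtype.ext (Algebra.TensorProduct.ext ?_ ?_) <;> ext x <;> simp
end

section
/- The spectrum Γ_A of a continuous inverse algebra A is equicontinuous: there is a balanced 0-neighbourhood U in A such that |χ(u)| < 1 for all χ ∈ Γ_A and u ∈ U. -/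
/-- The spectrum of a continuous inverse algebra is equicontinuous: there is a balanced
`0`-neighbourhood `U` of `A` with `|χ(u)| < 1` for every character `χ` of `A` and every
`u ∈ U`. -/
theorem spectrum_equicontinuous_of_CIA
    {A : Type*} [Ring A] [Algebra ℂ A] [TopologicalSpace A] [IsTopologicalRing A]
    [ContinuousSMul ℂ A]
    (hopen : IsOpen {a : A | IsUnit a})
    (hinv : ContinuousAt (Ring.inverse : A → A) 1) :
    ∃ U ∈ nhds (0 : A), Balanced ℂ U ∧
      ∀ (χ : A →ₐ[ℂ] ℂ), ∀ u ∈ U, ‖χ u‖ < 1 := by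
  -- The preimage of the (open) unit group under `u ↦ 1 - u` is a neighbourhood of `0`.
  have hV : (fun u : A => 1 - u) ⁻¹' {a : A | IsUnit a} ∈ nhds (0 : A) := by
    have hc : Continuous fun u : A => 1 - u := continuous_const.sub continuous_id
    have h1 : IsUnit (1 : A) := isUnit_one
    have := hopen.preimage hc
    exact this.mem_nhds (by simpa using h1)
  refine ⟨balancedCore ℂ _, balancedCore_mem_nhds_zero hV, balancedCore_balanced _, ?_⟩
  intro χ u hu
  by_contra h
  push_neg at h
  -- Scale `u` by `(χ u)⁻¹`, which has norm `≤ 1`.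
  have hχu : χ u ≠ 0 := by
    intro h0
    rw [h0, norm_zero] at h
    linarith
  have hnorm : ‖(χ u)⁻¹‖ ≤ 1 := by
    rw [norm_inv]
    exact inv_le_one_of_one_le₀ h
  have hmem : (χ u)⁻¹ • u ∈ balancedCore ℂ ((fun u : A => 1 - u) ⁻¹' {a : A | IsUnit a}) :=
    (balancedCore_balanced _).smul_mem hnorm hu
  have hmem' : (χ u)⁻¹ • u ∈ (fun u : A => 1 - u) ⁻¹' {a : A | IsUnit a} :=
    balancedCore_subset _ hmem
  have hunit : IsUnit (1 - (χ u)⁻¹ • u) := hmem'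
  have : IsUnit (χ (1 - (χ u)⁻¹ • u)) := hunit.map χ
  have hzero : χ (1 - (χ u)⁻¹ • u) = 0 := by
    rw [map_sub, map_one, map_smul, smul_eq_mul, inv_mul_cancel₀ hχu, sub_self]
  rw [hzero] at this
  exact this.ne_zero rfl
end
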